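/- Equality constraints are equivalent to Sinkhorn marginal constraints: let l ≥ 1, e ∈ ℝ_{≥0}^l and f ≥ 0, and define u_e = (e_1, …, e_l, 0) ∈ ℝ_{≥0}^{l+1} and v_e = (f, Σ_{i=1}^l e_i − f). Then a vector x ∈ [0,1]^l satisfies Σ_{i=1}^l e_i x_i = f if and only if there exists a matrix Γ ∈ [0,1]^{2×(l+1)} with Γ_{1,i} = x_i for i = 1,…,l, Σ_{r=1}^2 Γ_{r,j} = 1 for every column j, Σ_{j=1}^{l+1} Γ_{1,j} u_{e,j} = f, and Σ_{j=1}^{l+1} Γ_{2,j} u_{e,j} = Σ_{i=1}^l e_i − f. -/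
import Mathlib


open Finset

noncomputable section

/-- LinSAT encoding of an equality constraint: x ∈ [0,1]^l satisfies Σ e_i x_i = f iff the
Sinkhorn marginal constraints with column marginals u_e = (e_1, …, e_l, 0) and row
marginals v_e = (f, Σ e_i − f) are satisfiable by some Γ ∈ [0,1]^{2×(l+1)} whose first row
restricted to the first l columns is x. -/
theorem stmt13
    {l : ℕ} (hl : 0 < l)
    (e : Fin l → ℝ) (he : ∀ i, 0 ≤ e i) (f : ℝ) (hf : 0 ≤ f)
    (x : Fin l → ℝ) (hx : ∀ i, x i ∈ Set.Icc (0 : ℝ) 1) :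
    (∑ i, e i * x i = f) ↔
      ∃ Γ : Matrix (Fin 2) (Fin (l + 1)) ℝ,
        (∀ r j, Γ r j ∈ Set.Icc (0 : ℝ) 1) ∧
        (∀ i : Fin l, Γ 0 i.castSucc = x i) ∧
        (∀ j, ∑ r, Γ r j = 1) ∧
        (∑ j, Γ 0 j * (Fin.snoc e (0 : ℝ) : Fin (l + 1) → ℝ) j = f) ∧
        (∑ j, Γ 1 j * (Fin.snoc e (0 : ℝ) : Fin (l + 1) → ℝ) j = (∑ i, e i) - f) := by
  have key : ∀ g : Fin (l + 1) → ℝ,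
      ∑ j, g j * (Fin.snoc e (0 : ℝ) : Fin (l + 1) → ℝ) j = ∑ i, g i.castSucc * e i := by
    intro g
    rw [Fin.sum_univ_castSucc]
    simp [Fin.snoc_castSucc, Fin.snoc_last]
  constructor
  · intro hsum
    refine ⟨fun r j => if r = 0 then (Fin.snoc x 0 : Fin (l + 1) → ℝ) j
      else 1 - (Fin.snoc x 0 : Fin (l + 1) → ℝ) j, ?_, ?_, ?_, ?_, ?_⟩
    · intro r j
      have hj : (Fin.snoc x 0 : Fin (l + 1) → ℝ) j ∈ Set.Icc (0 : ℝ) 1 := by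
        refine Fin.lastCases ?_ ?_ j
        · simp
        · intro i; simpa using hx i
      fin_cases r <;> simp only [if_true, if_false] <;>
        constructor <;> simp <;> linarith [hj.1, hj.2]
    · intro i; simp
    · intro j; rw [Fin.sum_univ_two]; simp
    · rw [key]
      simp only [if_true]
      rw [← hsum]
      exact Finset.sum_congr rfl fun i _ => by simp [mul_comm]
    · rw [key]
      simp only [show (1 : Fin 2) ≠ 0 by decide, if_false]
      have : ∑ i : Fin l, (1 - (Fin.snoc x 0 : Fin (l + 1) → ℝ) i.castSucc) * e i
          = ∑ i : Fin l, (e i - e i * x i) := by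
        refine Finset.sum_congr rfl fun i _ => by simp [Fin.snoc_castSucc]; ring
      rw [this, Finset.sum_sub_distrib, hsum]
  · rintro ⟨Γ, hΓ, hrow, hcol, h1, h2⟩
    rw [key] at h1
    rw [← h1]
    exact Finset.sum_congr rfl fun i _ => by rw [hrow i, mul_comm]
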